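/- arXiv:1610.04118 — 2 statements merged into one kernel-verified Lean document; each statement's English description precedes it below -/
import Mathlib

section
/- Let (𝒜, τ) be a tracial C*-probability space, let n ≥ 2, let X_1, …, X_n be tuples of self-adjoint elements of 𝒜 with X_i of length r(i), and let R > 0, N, m ∈ ℕ, δ > 0. Then χ̄_orb,R(X_1, …, X_n; N, m, δ) = sup over all A_i ∈ ((M_N(ℂ)^sa)_R)^{r(i)} of log γ_{U(N)}^{⊗(n−1)}({(U_1, …, U_{n−1}) ∈ U(N)^{n−1} : (U_1, …, U_{n−1}, I_N) ∈ Γ_orb(X_1, …, X_n : (A_i)_{i=1}^n; N, m, δ)}), where I_N is the identity matrix; and the same holds with both suprema restricted to A_i ∈ Γ_R(X_i; N, m, δ). -/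
open MeasureTheory Filter
open scoped ComplexOrder Matrix.Norms.L2Operator

/-- A `*`-monomial (word) in indeterminates indexed by `ι`: each letter is an
indeterminate together with a flag recording whether it is starred. -/
abbrev StarWord (ι : Type*) := List (ι × Bool)

/-- Evaluation of a `*`-monomial at a family of elements of a `*`-monoid. -/
def StarWord.eval {M : Type*} [Monoid M] [Star M] {ι : Type*} (w : StarWord ι) (x : ι → M) : M :=
  (w.map fun p => if p.2 then star (x p.1) else x p.1).prod

/-- The normalized trace `tr_N` on `N × N` complex matrices. -/
noncomputable def trN (N : ℕ) (B : Matrix (Fin N) (Fin N) ℂ) : ℂ :=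
  B.trace / (N : ℂ)

noncomputable instance matrixMeasurableSpace (N : ℕ) :
    MeasurableSpace (Matrix (Fin N) (Fin N) ℂ) := borel _

instance matrixBorelSpace (N : ℕ) : BorelSpace (Matrix (Fin N) (Fin N) ℂ) := ⟨rfl⟩

/-- The unitary group `U(N)`. -/
abbrev UN (N : ℕ) := Matrix.unitaryGroup (Fin N) ℂ

/-- `(M_N(ℂ)^sa)_R`: self-adjoint `N × N` matrices of (`ℓ²`-)operator norm at most `R`. -/
def MsaR (N : ℕ) (R : ℝ) : Set (Matrix (Fin N) (Fin N) ℂ) :=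
  {B | B.IsHermitian ∧ ‖B‖ ≤ R}

/-- `τ` is a faithful tracial state on the unital C*-algebra `A`. -/
structure IsTracialState {A : Type*} [CStarAlgebra A] (τ : A →ₗ[ℂ] ℂ) : Prop where
  map_one : τ 1 = 1
  nonneg : ∀ a : A, 0 ≤ τ (star a * a)
  faithful : ∀ a : A, τ (star a * a) = 0 → a = 0
  tracial : ∀ a b : A, τ (a * b) = τ (b * a)

variable {A : Type*} [CStarAlgebra A]

/-- The microstate set `Γ_R(X; N, m, δ)` of a tuple `X` of elements of `A`. -/
def ΓR {ι : Type*} (τ : A →ₗ[ℂ] ℂ) (X : ι → A) (R : ℝ) (N m : ℕ) (δ : ℝ) :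
    Set (ι → Matrix (Fin N) (Fin N) ℂ) :=
  {B | (∀ j, B j ∈ MsaR N R) ∧
    ∀ w : StarWord ι, w.length ≤ m →
      ‖trN N (w.eval B) - τ (w.eval X)‖ < δ}

/-- The orbital microstate set `Γ_orb(X_1, …, X_n : (A_i)_{i=1}^n; N, m, δ)`. -/
def Γorb {n : ℕ} {ι : Fin n → Type*} (τ : A →ₗ[ℂ] ℂ) (X : ∀ i, ι i → A) (N : ℕ)
    (B : ∀ i, ι i → Matrix (Fin N) (Fin N) ℂ) (m : ℕ) (δ : ℝ) :
    Set (Fin n → UN N) :=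
  {U | ∀ w : StarWord ((i : Fin n) × ι i), w.length ≤ m →
    ‖(trN N (w.eval fun p => (U p.1 : Matrix (Fin N) (Fin N) ℂ) * B p.1 p.2 *
          star (U p.1 : Matrix (Fin N) (Fin N) ℂ))
        - τ (w.eval fun p => X p.1 p.2))‖ < δ}

/-- The conditional orbital microstate set
`Γ_orb(X_1, …, X_n : (A_i)_{i=1}^n : v; N, m, δ)` in the presence of the unitaries `v`. -/
def ΓorbCond {n s : ℕ} {ι : Fin n → Type*} (τ : A →ₗ[ℂ] ℂ) (X : ∀ i, ι i → A)
    (v : Fin s → A) (N : ℕ) (B : ∀ i, ι i → Matrix (Fin N) (Fin N) ℂ) (m : ℕ) (δ : ℝ) :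
    Set (Fin n → UN N) :=
  {U | ∃ V : Fin s → UN N,
    ∀ w : StarWord ((i : Fin n) × ι i ⊕ Fin s), w.length ≤ m →
      ‖(trN N (w.eval (Sum.elim
            (fun p => (U p.1 : Matrix (Fin N) (Fin N) ℂ) * B p.1 p.2 *
              star (U p.1 : Matrix (Fin N) (Fin N) ℂ))
            (fun j => (V j : Matrix (Fin N) (Fin N) ℂ))))
          - τ (w.eval (Sum.elim (fun p => X p.1 p.2) v)))‖ < δ}

/-- The unitary microstate set `Γ_u(v; N, m, δ)`. -/
def Γu {s : ℕ} (τ : A →ₗ[ℂ] ℂ) (v : Fin s → A) (N m : ℕ) (δ : ℝ) :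
    Set (Fin s → UN N) :=
  {V | ∀ w : StarWord (Fin s), w.length ≤ m →
    ‖trN N (w.eval fun j => (V j : Matrix (Fin N) (Fin N) ℂ)) - τ (w.eval v)‖ < δ}

section Entropies

variable (γ : ∀ N : ℕ, Measure (UN N))

/-- `χ̄_orb,R(X_1, …, X_n; N, m, δ)`: the supremum over matricial tuples `B_i` in
`(M_N(ℂ)^sa)_R` of the logarithm of the Haar measure of the orbital microstate set. -/
noncomputable def chiOrbBar {n : ℕ} {ι : Fin n → Type*} (τ : A →ₗ[ℂ] ℂ)
    (X : ∀ i, ι i → A) (R : ℝ) (N m : ℕ) (δ : ℝ) : EReal :=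
  ⨆ (B : ∀ i, ι i → Matrix (Fin N) (Fin N) ℂ) (_ : ∀ i j, B i j ∈ MsaR N R),
    ENNReal.log ((Measure.pi fun _ : Fin n => γ N) (Γorb τ X N B m δ))

/-- `χ_orb,R(X_1, …, X_n)`. -/
noncomputable def chiOrbR {n : ℕ} {ι : Fin n → Type*} (τ : A →ₗ[ℂ] ℂ)
    (X : ∀ i, ι i → A) (R : ℝ) : EReal :=
  ⨅ (m : ℕ) (δ : ℝ) (_ : 0 < δ),
    limsup (fun N : ℕ => ((((N : ℝ) ^ 2)⁻¹ : ℝ) : EReal) * chiOrbBar γ τ X R N m δ) atTop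

/-- The orbital free entropy `χ_orb(X_1, …, X_n)`. -/
noncomputable def chiOrb {n : ℕ} {ι : Fin n → Type*} (τ : A →ₗ[ℂ] ℂ)
    (X : ∀ i, ι i → A) : EReal :=
  ⨆ (R : ℝ) (_ : 0 < R), chiOrbR γ τ X R

/-- `χ̄_orb,R(X_1, …, X_n : v; N, m, δ)`, conditional version. -/
noncomputable def chiOrbCondBar {n s : ℕ} {ι : Fin n → Type*} (τ : A →ₗ[ℂ] ℂ)
    (X : ∀ i, ι i → A) (v : Fin s → A) (R : ℝ) (N m : ℕ) (δ : ℝ) : EReal :=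
  ⨆ (B : ∀ i, ι i → Matrix (Fin N) (Fin N) ℂ) (_ : ∀ i j, B i j ∈ MsaR N R),
    ENNReal.log ((Measure.pi fun _ : Fin n => γ N) (ΓorbCond τ X v N B m δ))

/-- The conditional orbital free entropy `χ_orb(X_1, …, X_n : v)`. -/
noncomputable def chiOrbCond {n s : ℕ} {ι : Fin n → Type*} (τ : A →ₗ[ℂ] ℂ)
    (X : ∀ i, ι i → A) (v : Fin s → A) : EReal :=
  ⨆ (R : ℝ) (_ : 0 < R), ⨅ (m : ℕ) (δ : ℝ) (_ : 0 < δ),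
    limsup (fun N : ℕ => ((((N : ℝ) ^ 2)⁻¹ : ℝ) : EReal) * chiOrbCondBar γ τ X v R N m δ) atTop

/-- The microstate free entropy `χ_u(v)` of a tuple of unitaries. -/
noncomputable def chiU {s : ℕ} (τ : A →ₗ[ℂ] ℂ) (v : Fin s → A) : EReal :=
  ⨅ (m : ℕ) (δ : ℝ) (_ : 0 < δ),
    limsup (fun N : ℕ => ((((N : ℝ) ^ 2)⁻¹ : ℝ) : EReal) *
      ENNReal.log ((Measure.pi fun _ : Fin s => γ N) (Γu τ v N m δ))) atTop

end Entropies

/-- Free independence of a family of subsets of `A` with respect to `τ`. -/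
def FreelyIndependent (τ : A →ₗ[ℂ] ℂ) {κ : Type*} (S : κ → Set A) : Prop :=
  ∀ (p : ℕ), 1 ≤ p → ∀ (idx : Fin p → κ) (a : Fin p → A),
    (∀ j, a j ∈ StarAlgebra.adjoin ℂ (S (idx j))) →
    (∀ j, τ (a j) = 0) →
    (∀ (j : ℕ) (h : j + 1 < p), idx ⟨j, by omega⟩ ≠ idx ⟨j + 1, h⟩) →
    τ (List.ofFn a).prod = 0

/-- `X` has finite-dimensional approximants in the sense of Voiculescu. -/
def HasFDA {ι : Type*} (τ : A →ₗ[ℂ] ℂ) (X : ι → A) : Prop :=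
  ∀ (m : ℕ) (δ : ℝ), 0 < δ →
    ∀ᶠ N in atTop, (ΓR τ X ((⨆ j, ‖X j‖) + 1) N m δ).Nonempty


section AuxLemmas

instance matrixSecondCountable (N : ℕ) :
    SecondCountableTopology (Matrix (Fin N) (Fin N) ℂ) :=
  inferInstanceAs (SecondCountableTopology (Fin N → Fin N → ℂ))

instance UNsecondCountable (N : ℕ) : SecondCountableTopology (UN N) :=
  TopologicalSpace.secondCountableTopology_induced _ _ Subtype.val

instance UNborel (N : ℕ) : BorelSpace (UN N) :=
  inferInstanceAs (BorelSpace ((Matrix.unitaryGroup (Fin N) ℂ : Set (Matrix (Fin N) (Fin N) ℂ))))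

private lemma star_mul_cancel_left' {M : Type*} [Monoid M] [StarMul M]
    {V : M} (hV : V ∈ unitary M) (t : M) : star V * (V * t) = t := by
  rw [← mul_assoc, Unitary.star_mul_self_of_mem hV, one_mul]

lemma StarWord.eval_conj {M : Type*} [Monoid M] [StarMul M] {σ : Type*}
    (w : StarWord σ) {V : M} (hV : V ∈ unitary M) (x : σ → M) :
    w.eval (fun p => V * x p * star V) = V * w.eval x * star V := by
  induction w with
  | nil => simp [StarWord.eval, Unitary.mul_star_self_of_mem hV]
  | cons p w ih =>
      have hletter : (if p.2 then star (V * x p.1 * star V) else V * x p.1 * star V)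
          = V * (if p.2 then star (x p.1) else x p.1) * star V := by
        cases p.2 <;> simp [star_mul, mul_assoc]
      simp only [StarWord.eval, List.map_cons, List.prod_cons] at ih ⊢
      rw [hletter, ih]
      simp only [mul_assoc, star_mul_cancel_left' hV]

lemma trN_conj {N : ℕ} {V : Matrix (Fin N) (Fin N) ℂ}
    (hV : V ∈ unitary (Matrix (Fin N) (Fin N) ℂ)) (Y : Matrix (Fin N) (Fin N) ℂ) :
    trN N (V * Y * star V) = trN N Y := by
  unfold trN
  rw [Matrix.trace_mul_cycle, Unitary.star_mul_self_of_mem hV, one_mul]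

lemma Γorb_smul_mem {A : Type*} [CStarAlgebra A] {n : ℕ} {ι : Fin n → Type*}
    (τ : A →ₗ[ℂ] ℂ) (X : ∀ i, ι i → A)
    {N : ℕ} (B : ∀ i, ι i → Matrix (Fin N) (Fin N) ℂ) {m : ℕ} {δ : ℝ}
    (V : UN N) (U : Fin n → UN N) :
    (fun j => V * U j) ∈ Γorb τ X N B m δ ↔ U ∈ Γorb τ X N B m δ := by
  have hV : (V : Matrix (Fin N) (Fin N) ℂ) ∈ unitary (Matrix (Fin N) (Fin N) ℂ) := V.2
  have key : ∀ w : StarWord ((i : Fin n) × ι i),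
      w.eval (fun p => (((fun j => V * U j) p.1 : UN N) : Matrix (Fin N) (Fin N) ℂ) * B p.1 p.2 *
          star (((fun j => V * U j) p.1 : UN N) : Matrix (Fin N) (Fin N) ℂ))
      = (V : Matrix (Fin N) (Fin N) ℂ) *
          w.eval (fun p => (U p.1 : Matrix (Fin N) (Fin N) ℂ) * B p.1 p.2 *
            star (U p.1 : Matrix (Fin N) (Fin N) ℂ)) * star (V : Matrix (Fin N) (Fin N) ℂ) := by
    intro w
    rw [← StarWord.eval_conj w hV]
    congr 1
    funext p
    show ((V : Matrix (Fin N) (Fin N) ℂ) * (U p.1 : Matrix (Fin N) (Fin N) ℂ)) * B p.1 p.2 *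
        star ((V : Matrix (Fin N) (Fin N) ℂ) * (U p.1 : Matrix (Fin N) (Fin N) ℂ)) = _
    rw [star_mul]
    simp only [mul_assoc]
  constructor
  · intro hU w hw
    have := hU w hw
    rwa [key w, trN_conj hV] at this
  · intro hU w hw
    have := hU w hw
    rwa [key w, trN_conj hV]

lemma continuous_starWord_eval {N : ℕ} {X' : Type*} [TopologicalSpace X'] {σ : Type*}
    (w : StarWord σ) {f : σ → X' → Matrix (Fin N) (Fin N) ℂ} (hf : ∀ p, Continuous (f p)) :
    Continuous fun x => w.eval fun p => f p x := by
  induction w with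
  | nil => simpa [StarWord.eval] using continuous_const
  | cons p w ih =>
      simp only [StarWord.eval, List.map_cons, List.prod_cons]
      have h1 : Continuous fun x => (if p.2 then star (f p.1 x) else f p.1 x) := by
        cases p.2
        · simpa using hf p.1
        · simp only [if_true]
          simp only [Matrix.star_eq_conjTranspose]
          exact (hf p.1).matrix_conjTranspose
      exact h1.matrix_mul ih

lemma measurableSet_Γorb {A : Type*} [CStarAlgebra A] {n : ℕ} {ι : Fin n → Type*}
    [∀ i, Countable (ι i)] (τ : A →ₗ[ℂ] ℂ) (X : ∀ i, ι i → A)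
    {N : ℕ} (B : ∀ i, ι i → Matrix (Fin N) (Fin N) ℂ) (m : ℕ) (δ : ℝ) :
    MeasurableSet (Γorb τ X N B m δ) := by
  have hset : Γorb τ X N B m δ =
      ⋂ (w : StarWord ((i : Fin n) × ι i)) (_ : w.length ≤ m),
        {U : Fin n → UN N |
          ‖(trN N (w.eval fun p => (U p.1 : Matrix (Fin N) (Fin N) ℂ) * B p.1 p.2 *
                star (U p.1 : Matrix (Fin N) (Fin N) ℂ))
              - τ (w.eval fun p => X p.1 p.2))‖ < δ} := by
    ext U
    simp [Γorb, Set.mem_iInter]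
  rw [hset]
  refine MeasurableSet.iInter fun w => MeasurableSet.iInter fun _ => ?_
  have he : Continuous fun U : Fin n → UN N =>
      w.eval fun p => (U p.1 : Matrix (Fin N) (Fin N) ℂ) * B p.1 p.2 *
        star (U p.1 : Matrix (Fin N) (Fin N) ℂ) := by
    apply continuous_starWord_eval
    intro p
    have hu : Continuous fun U : Fin n → UN N => (U p.1 : Matrix (Fin N) (Fin N) ℂ) :=
      continuous_subtype_val.comp (continuous_apply p.1)
    have hs : Continuous fun U : Fin n → UN N => star (U p.1 : Matrix (Fin N) (Fin N) ℂ) := by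
      simp only [Matrix.star_eq_conjTranspose]
      exact hu.matrix_conjTranspose
    exact (hu.matrix_mul continuous_const).matrix_mul hs
  have ht : Continuous fun U : Fin n → UN N =>
      trN N (w.eval fun p => (U p.1 : Matrix (Fin N) (Fin N) ℂ) * B p.1 p.2 *
        star (U p.1 : Matrix (Fin N) (Fin N) ℂ)) := by
    unfold trN
    exact he.matrix_trace.div_const _
  have hc : Continuous fun U : Fin n → UN N =>
      ‖(trN N (w.eval fun p => (U p.1 : Matrix (Fin N) (Fin N) ℂ) * B p.1 p.2 *
            star (U p.1 : Matrix (Fin N) (Fin N) ℂ))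
          - τ (w.eval fun p => X p.1 p.2))‖ :=
    continuous_norm.comp (ht.sub continuous_const)
  exact (isOpen_lt hc continuous_const).measurableSet

lemma measure_slice {N k : ℕ} (γ : Measure (UN N)) [IsProbabilityMeasure γ]
    [γ.IsMulLeftInvariant] (S : Set (Fin (k + 1) → UN N)) (hS : MeasurableSet S)
    (hinv : ∀ (V : UN N) (U : Fin (k + 1) → UN N), ((fun j => V * U j) ∈ S ↔ U ∈ S)) :
    (Measure.pi fun _ : Fin (k + 1) => γ) S
      = (Measure.pi fun _ : Fin k => γ)
          {W : Fin k → UN N |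
            (fun i : Fin (k + 1) => if h : (i : ℕ) < k then W ⟨i, h⟩ else 1) ∈ S} := by
  set e := MeasurableEquiv.piFinSuccAbove (fun _ : Fin (k + 1) => UN N) (Fin.last k) with he_def
  have he := measurePreserving_piFinSuccAbove (fun _ : Fin (k + 1) => γ) (Fin.last k)
  have h1 : (Measure.pi fun _ : Fin (k + 1) => γ) S
      = (γ.prod (Measure.pi fun _ : Fin k => γ)) (e.symm ⁻¹' S) :=
    ((MeasurePreserving.symm e he).measure_preimage hS.nullMeasurableSet).symm
  have hgm : Measurable (Function.uncurry
      fun (V : UN N) (W : Fin k → UN N) => fun i => V * W i) := by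
    refine measurable_pi_lambda _ fun i => ?_
    have : Continuous fun p : UN N × (Fin k → UN N) => p.1 * p.2 i :=
      continuous_fst.mul ((continuous_apply i).comp continuous_snd)
    exact this.measurable
  have hψ : MeasurePreserving (fun p : UN N × (Fin k → UN N) => (p.1, fun i => p.1 * p.2 i))
      (γ.prod (Measure.pi fun _ : Fin k => γ)) (γ.prod (Measure.pi fun _ : Fin k => γ)) :=
    (MeasurePreserving.id γ).skew_product hgm
      (Filter.Eventually.of_forall fun V =>
        (measurePreserving_pi _ _ fun _ : Fin k => measurePreserving_mul_left γ V).map_eq)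
  have h2 : (γ.prod (Measure.pi fun _ : Fin k => γ)) (e.symm ⁻¹' S)
      = (γ.prod (Measure.pi fun _ : Fin k => γ))
          ((fun p : UN N × (Fin k → UN N) => (p.1, fun i => p.1 * p.2 i)) ⁻¹' (e.symm ⁻¹' S)) :=
    (hψ.measure_preimage (e.symm.measurable hS).nullMeasurableSet).symm
  have h3 : (fun p : UN N × (Fin k → UN N) => (p.1, fun i => p.1 * p.2 i)) ⁻¹' (e.symm ⁻¹' S)
      = Set.univ ×ˢ {W : Fin k → UN N |
          (fun i : Fin (k + 1) => if h : (i : ℕ) < k then W ⟨i, h⟩ else 1) ∈ S} := by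
    ext q
    obtain ⟨V, W⟩ := q
    simp only [Set.mem_preimage, Set.mem_prod, Set.mem_univ, true_and, Set.mem_setOf_eq]
    have hpad : e.symm (V, fun i => V * W i)
        = fun j => V * (fun i : Fin (k + 1) => if h : (i : ℕ) < k then W ⟨i, h⟩ else 1) j := by
      have hsymm : e.symm (V, fun i => V * W i) = Fin.snoc (fun i => V * W i) V := by
        show (Fin.insertNthEquiv (fun _ : Fin (k + 1) => UN N) (Fin.last k))
            (V, fun i => V * W i) = _
        rw [Fin.insertNthEquiv_last]
        rfl
      rw [hsymm]
      funext j
      refine Fin.lastCases ?_ (fun i => ?_) j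
      · simp [Fin.snoc_last, Fin.val_last, lt_irrefl, mul_one]
      · simp [Fin.snoc_castSucc, Fin.coe_castSucc, Fin.is_lt, Fin.eta]
    rw [hpad, hinv]
  rw [h1, h2, h3, Measure.prod_prod, measure_univ, one_mul]

end AuxLemmas

/-- **Remark 2.** Alternative representation of
`χ̄_orb,R(X_1, …, X_n; N, m, δ)` for `n ≥ 2`: the supremum of the `γ^{⊗n}`-measure of the
orbital microstate sets equals the supremum of the `γ^{⊗(n-1)}`-measure of their slices at
`U_n = I_N`, both for the suprema over all tuples in `(M_N(ℂ)^sa)_R` and for the suprema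
restricted to the microstate sets `Γ_R(X_i; N, m, δ)`. -/
theorem chiOrbBar_eq_slice_rep {A : Type*} [CStarAlgebra A]
    (τ : A →ₗ[ℂ] ℂ) (hτ : IsTracialState τ)
    (n : ℕ) (hn : 2 ≤ n) (r : Fin n → ℕ) (X : ∀ i, Fin (r i) → A)
    (hX : ∀ i j, IsSelfAdjoint (X i j))
    (R : ℝ) (hR : 0 < R) (N m : ℕ) (δ : ℝ) (hδ : 0 < δ)
    (γ : Measure (UN N)) (hγ : γ.IsHaarMeasure) (hγp : IsProbabilityMeasure γ) :
    (⨆ (B : ∀ i, Fin (r i) → Matrix (Fin N) (Fin N) ℂ) (_ : ∀ i j, B i j ∈ MsaR N R),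
        ENNReal.log ((Measure.pi fun _ : Fin n => γ) (Γorb τ X N B m δ)))
      = (⨆ (B : ∀ i, Fin (r i) → Matrix (Fin N) (Fin N) ℂ) (_ : ∀ i j, B i j ∈ MsaR N R),
          ENNReal.log ((Measure.pi fun _ : Fin (n - 1) => γ)
            {U : Fin (n - 1) → UN N |
              (fun i : Fin n => if h : (i : ℕ) < n - 1 then U ⟨i, h⟩ else 1)
                ∈ Γorb τ X N B m δ}))
    ∧ (⨆ (B : ∀ i, Fin (r i) → Matrix (Fin N) (Fin N) ℂ)
          (_ : ∀ i, B i ∈ ΓR τ (X i) R N m δ),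
          ENNReal.log ((Measure.pi fun _ : Fin n => γ) (Γorb τ X N B m δ)))
      = ⨆ (B : ∀ i, Fin (r i) → Matrix (Fin N) (Fin N) ℂ)
          (_ : ∀ i, B i ∈ ΓR τ (X i) R N m δ),
          ENNReal.log ((Measure.pi fun _ : Fin (n - 1) => γ)
            {U : Fin (n - 1) → UN N |
              (fun i : Fin n => if h : (i : ℕ) < n - 1 then U ⟨i, h⟩ else 1)
                ∈ Γorb τ X N B m δ}) := by
  haveI := hγ
  haveI := hγp
  obtain ⟨k, rfl⟩ : ∃ k, n = k + 1 := ⟨n - 1, by omega⟩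
  have main : ∀ B : ∀ i, Fin (r i) → Matrix (Fin N) (Fin N) ℂ,
      (Measure.pi fun _ : Fin (k + 1) => γ) (Γorb τ X N B m δ)
        = (Measure.pi fun _ : Fin k => γ)
            {W : Fin k → UN N |
              (fun i : Fin (k + 1) => if h : (i : ℕ) < k then W ⟨i, h⟩ else 1)
                ∈ Γorb τ X N B m δ} := fun B =>
    measure_slice γ _ (measurableSet_Γorb τ X B m δ) (fun V U => Γorb_smul_mem τ X B V U)
  exact ⟨iSup_congr fun B => iSup_congr fun _ => congrArg ENNReal.log (main B),
    iSup_congr fun B => iSup_congr fun _ => congrArg ENNReal.log (main B)⟩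
end

section
/- Let N, n ∈ ℕ and let γ_{U(N)} be the Haar probability measure on the group U(N) of N×N complex unitary matrices. Let A ⊆ U(N)^n and Θ, S ⊆ U(N)^{n+1} be measurable sets such that: (i) for every (V_1, …, V_n, U) ∈ Θ with (V_1, …, V_n) ∈ A one has (V_1 U, …, V_n U, U) ∈ S; and (ii) for every (V_1, …, V_n) ∈ U(N)^n one has γ_{U(N)}({U ∈ U(N) : (V_1, …, V_n, U) ∈ Θ}) > 1/2. Then γ_{U(N)}^{⊗(n+1)}(S) ≥ (1/2) · γ_{U(N)}^{⊗n}(A). -/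
open MeasureTheory

lemma UN.isClosed (N : ℕ) :
    IsClosed (Matrix.unitaryGroup (Fin N) ℂ : Set (Matrix (Fin N) (Fin N) ℂ)) := by
  have h : (Matrix.unitaryGroup (Fin N) ℂ : Set (Matrix (Fin N) (Fin N) ℂ)) =
      (fun U : Matrix (Fin N) (Fin N) ℂ => (star U * U, U * star U)) ⁻¹'
        {((1 : Matrix (Fin N) (Fin N) ℂ), (1 : Matrix (Fin N) (Fin N) ℂ))} := by
    ext U
    simp only [SetLike.mem_coe, Unitary.mem_iff, Set.mem_preimage, Set.mem_singleton_iff,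
      Prod.mk.injEq]
  rw [h]
  exact isClosed_singleton.preimage
    ((continuous_id.matrix_conjTranspose.matrix_mul continuous_id).prodMk
      (continuous_id.matrix_mul continuous_id.matrix_conjTranspose))

instance (N : ℕ) : IsTopologicalGroup (UN N) where
  continuous_mul := by
    apply continuous_induced_rng.2
    exact (continuous_subtype_val.comp continuous_fst).matrix_mul
      (continuous_subtype_val.comp continuous_snd)
  continuous_inv := by
    apply continuous_induced_rng.2
    have h : (fun U : UN N => ((U⁻¹ : UN N) : Matrix (Fin N) (Fin N) ℂ)) =
        fun U : UN N => star ((U : Matrix (Fin N) (Fin N) ℂ)) := by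
      funext U
      rw [← Unitary.star_eq_inv, Unitary.coe_star]
    show Continuous (fun U : UN N => ((U⁻¹ : UN N) : Matrix (Fin N) (Fin N) ℂ))
    rw [h]
    exact continuous_star.comp continuous_subtype_val

instance (N : ℕ) : BorelSpace (UN N) := Subtype.borelSpace _

instance (N : ℕ) : LocallyCompactSpace (Matrix (Fin N) (Fin N) ℂ) := by
  show LocallyCompactSpace (Fin N → Fin N → ℂ); infer_instance

instance (N : ℕ) : SecondCountableTopology (Matrix (Fin N) (Fin N) ℂ) := by
  show SecondCountableTopology (Fin N → Fin N → ℂ); infer_instance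

instance (N : ℕ) : LocallyCompactSpace (UN N) := (UN.isClosed N).locallyCompactSpace

/-- The abstract measure-theoretic core of the lower bound for orbital free
entropy under unitary conjugation: if every `Θ`-slice has Haar measure `> 1/2` and `Θ`
transports `A` into `S` via `(V, U) ↦ ((V_i U)_i, U)`, then `γ^{⊗(n+1)}(S) ≥ γ^{⊗n}(A)/2`. -/
theorem measure_ge_half_of_transport (N n : ℕ)
    (γ : Measure (UN N)) (hγ : γ.IsHaarMeasure) (hγp : IsProbabilityMeasure γ)
    (A : Set (Fin n → UN N)) (hA : MeasurableSet A)
    (Θ S : Set ((Fin n → UN N) × UN N)) (hΘ : MeasurableSet Θ) (hS : MeasurableSet S)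
    (h1 : ∀ (V : Fin n → UN N) (U : UN N),
      (V, U) ∈ Θ → V ∈ A → ((fun i => V i * U), U) ∈ S)
    (h2 : ∀ V : Fin n → UN N, 1 / 2 < γ {U : UN N | (V, U) ∈ Θ}) :
    1 / 2 * (Measure.pi fun _ : Fin n => γ) A
      ≤ ((Measure.pi fun _ : Fin n => γ).prod γ) S := by
  haveI := hγ
  haveI := hγp
  set μ : Measure (Fin n → UN N) := Measure.pi fun _ : Fin n => γ with hμ
  -- right invariance of γ (compact group ⇒ unimodular, via uniqueness of Haar prob. measures)
  haveI hri : γ.IsMulRightInvariant := by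
    constructor
    intro g
    haveI : IsProbabilityMeasure (γ.map (· * g)) :=
      Measure.isProbabilityMeasure_map (measurable_mul_const g).aemeasurable
    exact Measure.isHaarMeasure_eq_of_isProbabilityMeasure (γ.map (· * g)) γ
  -- slice measurability
  have hSslice : ∀ U : UN N, MeasurableSet {V : Fin n → UN N | (V, U) ∈ S} :=
    fun U => hS.preimage (measurable_prodMk_right)
  have hΘA : MeasurableSet (Θ ∩ A ×ˢ (Set.univ : Set (UN N))) :=
    hΘ.inter (hA.prod MeasurableSet.univ)
  -- key slice-wise estimate via right translation
  have key : ∀ U : UN N, μ {V : Fin n → UN N | (V, U) ∈ Θ ∧ V ∈ A}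
      ≤ μ {V : Fin n → UN N | (V, U) ∈ S} := by
    intro U
    have mp : MeasurePreserving (fun (V : Fin n → UN N) (i : Fin n) => V i * U) μ μ :=
      measurePreserving_pi _ _ (fun _ => measurePreserving_mul_right γ U)
    have hsub : {V : Fin n → UN N | (V, U) ∈ Θ ∧ V ∈ A} ⊆
        (fun (V : Fin n → UN N) (i : Fin n) => V i * U) ⁻¹'
          {V : Fin n → UN N | (V, U) ∈ S} := by
      rintro V ⟨hVΘ, hVA⟩
      exact h1 V U hVΘ hVA
    calc μ {V : Fin n → UN N | (V, U) ∈ Θ ∧ V ∈ A}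
        ≤ μ ((fun (V : Fin n → UN N) (i : Fin n) => V i * U) ⁻¹'
            {V : Fin n → UN N | (V, U) ∈ S}) := measure_mono hsub
      _ = μ {V : Fin n → UN N | (V, U) ∈ S} :=
          mp.measure_preimage (hSslice U).nullMeasurableSet
  calc 1 / 2 * μ A
      = ∫⁻ V, A.indicator (fun _ => (1 / 2 : ENNReal)) V ∂μ := by
        rw [lintegral_indicator_const hA]
    _ ≤ ∫⁻ V, γ {U : UN N | (V, U) ∈ Θ ∧ V ∈ A} ∂μ := by
        refine lintegral_mono fun V => ?_
        by_cases hV : V ∈ A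
        · rw [Set.indicator_of_mem hV]
          have : {U : UN N | (V, U) ∈ Θ ∧ V ∈ A} = {U : UN N | (V, U) ∈ Θ} := by
            ext U; simp [hV]
          rw [this]
          exact (h2 V).le
        · rw [Set.indicator_of_notMem hV]
          exact zero_le
    _ = (μ.prod γ) (Θ ∩ A ×ˢ (Set.univ : Set (UN N))) := by
        rw [Measure.prod_apply hΘA]
        congr 1
        funext V
        congr 1
        ext U
        simp only [Set.mem_setOf_eq, Set.mem_inter_iff, Set.mem_preimage, Set.mem_prod,
          Set.mem_univ, and_true]
    _ = ∫⁻ U, μ ((fun V : Fin n → UN N => (V, U)) ⁻¹'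
          (Θ ∩ A ×ˢ (Set.univ : Set (UN N)))) ∂γ := Measure.prod_apply_symm hΘA
    _ ≤ ∫⁻ U, μ {V : Fin n → UN N | (V, U) ∈ S} ∂γ := by
        refine lintegral_mono fun U => ?_
        have : (fun V : Fin n → UN N => (V, U)) ⁻¹' (Θ ∩ A ×ˢ (Set.univ : Set (UN N)))
            = {V : Fin n → UN N | (V, U) ∈ Θ ∧ V ∈ A} := by
          ext V
          simp only [Set.mem_setOf_eq, Set.mem_inter_iff, Set.mem_preimage, Set.mem_prod,
            Set.mem_univ, and_true]
        rw [this]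
        exact key U
    _ = (μ.prod γ) S := (Measure.prod_apply_symm hS).symm
end
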